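/- Let r ∈ 2^ω be a real and n < ω. (1) If φ(x) is a Σ¹ₙ formula of the form ∃y₀∀y₁⋯ψ(x,y₀,y₁,…) with ψ arithmetic, then the maximal condition of ℂ_{ω₁} forces φ(ř) if and only if there is a countable linear order A₀ and a ℂ_{A₀}-name ẏ₀ such that for every countable linear order A₁ with A₀ ≤ A₁ and every ℂ_{A₁}-name ẏ₁ there is a countable linear order A₂ with A₁ ≤ A₂ and a ℂ_{A₂}-name ẏ₂ such that …, such that the maximal condition of ℂ_{A_{n-1}} forces ψ(ř, ẏ₀, ẏ₁, …). (2) Dually, if φ(x) is a Π¹ₙ formula of the form ∀y₀∃y₁⋯ψ(x,y₀,y₁,…), then ℂ_{ω₁} forces φ(ř) if and only if for every countable linear order A₀ and every ℂ_{A₀}-name ẏ₀ there is a countable linear order A₁ with A₀ ≤ A₁ and a ℂ_{A₁}-name ẏ₁ such that for every countable linear order A₂ with A₁ ≤ A₂ and every ℂ_{A₂}-name ẏ₂ …, such that the maximal condition of ℂ_{A_{n-1}} forces ψ(ř, ẏ₀, ẏ₁, …). -/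

import Mathlib

open scoped Classical

/-! # Core framework: second-order logic over levels of Gödel's `L` -/

/-- The von Neumann natural numbers inside `ZFSet`. -/
noncomputable def natToZF : ℕ → ZFSet.{0}
  | 0 => ∅
  | n+1 => insert (natToZF n) (natToZF n)

/-- Formulas of second-order logic in the language of set theory (de Bruijn indices,
first-order variables and second-order (subset) variables). -/
inductive SOFormula : Type
  | memFF : ℕ → ℕ → SOFormula        -- xᵢ ∈ xⱼ
  | eqFF  : ℕ → ℕ → SOFormula        -- xᵢ = xⱼ
  | memFS : ℕ → ℕ → SOFormula        -- xᵢ ∈ Xⱼ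
  | not   : SOFormula → SOFormula
  | and   : SOFormula → SOFormula → SOFormula
  | allFO : SOFormula → SOFormula
  | exFO  : SOFormula → SOFormula
  | allSO : SOFormula → SOFormula
  | exSO  : SOFormula → SOFormula

/-- Prepend a value to a valuation (de Bruijn style). -/
def consF {α : Sort _} (a : α) (v : ℕ → α) : ℕ → α
  | 0 => a
  | n+1 => v n

/-- Satisfaction of a second-order formula in the structure `(A, ∈)`, where first-order
quantifiers range over the elements of `A`, and second-order quantifiers range over those
subsets `S` of `A` satisfying the predicate `D` (taking `D := fun _ => True` gives full
second-order logic, i.e. quantification over the full powerset of `A`; other choices of `D`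
give the relativization of satisfaction to an inner model or a generic extension). -/
def SOSatIn (D : Set ZFSet.{0} → Prop) (A : ZFSet.{0}) :
    SOFormula → (ℕ → ZFSet.{0}) → (ℕ → Set ZFSet.{0}) → Prop
  | .memFF i j, v, _ => v i ∈ v j
  | .eqFF i j, v, _ => v i = v j
  | .memFS i j, v, V => v i ∈ V j
  | .not φ, v, V => ¬ SOSatIn D A φ v V
  | .and φ ψ, v, V => SOSatIn D A φ v V ∧ SOSatIn D A ψ v V
  | .allFO φ, v, V => ∀ a : ZFSet, a ∈ A → SOSatIn D A φ (consF a v) V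
  | .exFO φ, v, V => ∃ a : ZFSet, a ∈ A ∧ SOSatIn D A φ (consF a v) V
  | .allSO φ, v, V => ∀ S : Set ZFSet, S ⊆ A.toSet → D S → SOSatIn D A φ v (consF S V)
  | .exSO φ, v, V => ∃ S : Set ZFSet, S ⊆ A.toSet ∧ D S ∧ SOSatIn D A φ v (consF S V)

/-- Full (unrelativized) second-order satisfaction over `(A, ∈)`. -/
def SOSat (A : ZFSet.{0}) : SOFormula → (ℕ → ZFSet.{0}) → (ℕ → Set ZFSet.{0}) → Prop :=
  SOSatIn (fun _ => True) A

/-- A formula with no second-order quantifiers ("arithmetic" / second-order quantifier free). -/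
def NoSOQuant : SOFormula → Prop
  | .memFF _ _ => True
  | .eqFF _ _ => True
  | .memFS _ _ => True
  | .not φ => NoSOQuant φ
  | .and φ ψ => NoSOQuant φ ∧ NoSOQuant ψ
  | .allFO φ => NoSOQuant φ
  | .exFO φ => NoSOQuant φ
  | .allSO _ => False
  | .exSO _ => False

mutual
  /-- `Σ¹ₙ` formulas: `n` alternating blocks of second-order quantifiers, starting with `∃`,
  in front of a second-order quantifier free matrix. -/
  inductive IsSigmaSO : ℕ → SOFormula → Prop
    | arith {φ : SOFormula} (n : ℕ) : NoSOQuant φ → IsSigmaSO n φ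
    | exq {n : ℕ} {φ : SOFormula} : IsPiSO n φ → IsSigmaSO (n+1) (SOFormula.exSO φ)
    | exq2 {n : ℕ} {φ : SOFormula} : IsSigmaSO (n+1) φ → IsSigmaSO (n+1) (SOFormula.exSO φ)
  /-- `Π¹ₙ` formulas. -/
  inductive IsPiSO : ℕ → SOFormula → Prop
    | arith {φ : SOFormula} (n : ℕ) : NoSOQuant φ → IsPiSO n φ
    | allq {n : ℕ} {φ : SOFormula} : IsSigmaSO n φ → IsPiSO (n+1) (SOFormula.allSO φ)
    | allq2 {n : ℕ} {φ : SOFormula} : IsPiSO (n+1) φ → IsPiSO (n+1) (SOFormula.allSO φ)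
end

/-- The two pointclasses `Σ` and `Π`. -/
inductive SOClass : Type
  | sigma : SOClass
  | pi : SOClass

/-- `Γ¹ₙ` formulas, for `Γ ∈ {Σ, Π}`. -/
def IsGammaSO : SOClass → ℕ → SOFormula → Prop
  | .sigma => IsSigmaSO
  | .pi => IsPiSO

/-- `x` is a subset of `A` which is definable over `(A, ∈)` by a first-order formula
with parameters from `A`. -/
def DefinableSub (A x : ZFSet.{0}) : Prop :=
  ∃ (φ : SOFormula) (v : ℕ → ZFSet), NoSOQuant φ ∧ (∀ n, v n ∈ A) ∧
    ∀ y, y ∈ x ↔ y ∈ A ∧ SOSat A φ (consF y v) (fun _ => ∅)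

/-- The definable powerset operation. -/
noncomputable def defPow (A : ZFSet.{0}) : ZFSet.{0} :=
  ZFSet.sep (fun x => DefinableSub A x) (ZFSet.powerset A)

/-- The `o`-th level `L_o` of Gödel's constructible hierarchy. -/
noncomputable def LSet (o : Ordinal.{0}) : ZFSet.{0} :=
  Ordinal.limitRecOn o ∅ (fun _ ih => defPow ih)
    (fun o' _ ih => ZFSet.sUnion (ZFSet.range (fun i : o'.ToType =>
      ih ((Ordinal.ToType.mk (o := o')).symm i).1 ((Ordinal.ToType.mk (o := o')).symm i).2)))

/-- A set is constructible if it belongs to some level of the `L`-hierarchy. -/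
def Constructible (x : ZFSet.{0}) : Prop := ∃ o : Ordinal.{0}, x ∈ LSet o

/-- The collection of subsets of the universe that exist in `L`
(used to relativize second-order quantifiers to `L`). -/
def ConstructibleD : Set ZFSet.{0} → Prop :=
  fun S => ∃ z : ZFSet, Constructible z ∧ S = z.toSet

/-- The von Neumann ordinal corresponding to an `Ordinal`. -/
noncomputable def ordToZF (o : Ordinal.{0}) : ZFSet.{0} :=
  ZFSet.range (fun i : o.ToType =>
    have : ((Ordinal.ToType.mk (o := o)).symm i).1 < o := ((Ordinal.ToType.mk (o := o)).symm i).2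
    ordToZF ((Ordinal.ToType.mk (o := o)).symm i).1)
  termination_by o
  decreasing_by exact this

/-- The valuation assigning the (von Neumann codes of the) ordinal parameters
`β 0, …, β (l-1)` to the first `l` first-order variables. -/
noncomputable def paramVal (l : ℕ) (β : ℕ → Ordinal.{0}) : ℕ → ZFSet.{0} :=
  fun i => if i < l then ordToZF (β i) else ∅

/-- `α` is `Γ¹ₙ`-reflecting, with second-order quantifiers relativized to `D`:
for every tuple `β 0 < … < β (l-1) < α` and every `Γ¹ₙ` formula `φ`, if `L_α ⊨ φ(β⃗)`
then there is `α'` with `β (l-1) < α' < α` and `L_{α'} ⊨ φ(β⃗)`. -/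
def ReflectingIn (D : Set ZFSet.{0} → Prop) (Γ : SOClass) (n : ℕ) (α : Ordinal.{0}) : Prop :=
  ∀ (l : ℕ) (β : ℕ → Ordinal.{0}),
    (∀ i j, i < j → j < l → β i < β j) → (∀ i, i < l → β i < α) →
    ∀ φ : SOFormula, IsGammaSO Γ n φ →
      SOSatIn D (LSet α) φ (paramVal l β) (fun _ => ∅) →
      ∃ α' : Ordinal, (∀ i, i < l → β i < α') ∧ α' < α ∧
        SOSatIn D (LSet α') φ (paramVal l β) (fun _ => ∅)

/-- `α` is `Γ¹ₙ`-reflecting (full second-order logic, i.e. computed in `V`). -/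
def Reflecting : SOClass → ℕ → Ordinal.{0} → Prop := ReflectingIn (fun _ => True)

/-- The least `Γ¹ₙ`-reflecting ordinal, relativized to `D`. -/
noncomputable def leastReflecting (D : Set ZFSet.{0} → Prop) (Γ : SOClass) (n : ℕ) :
    Ordinal.{0} :=
  sInf {α | ReflectingIn D Γ n α}

/-- `σ¹ₙ`, the least `Σ¹ₙ`-reflecting ordinal. -/
noncomputable def sigma1 (n : ℕ) : Ordinal.{0} := leastReflecting (fun _ => True) .sigma n

/-- `π¹ₙ`, the least `Π¹ₙ`-reflecting ordinal. -/
noncomputable def pi1 (n : ℕ) : Ordinal.{0} := leastReflecting (fun _ => True) .pi n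

/-- `(σ¹ₙ)^L`. -/
noncomputable def sigma1L (n : ℕ) : Ordinal.{0} := leastReflecting ConstructibleD .sigma n

/-- `(π¹ₙ)^L`. -/
noncomputable def pi1L (n : ℕ) : Ordinal.{0} := leastReflecting ConstructibleD .pi n

/-- The first uncountable ordinal `ω₁` (of `V`). -/
noncomputable def omega1V : Ordinal.{0} := (Cardinal.aleph 1).ord
/-! # Forcing machinery for second-order statements over `L_α` -/

/-- A `P`-name for a subset of a ground-model set: to each ground-model set it assigns
the set of conditions forcing it into the named set. -/
def PName (P : Type*) := ZFSet.{0} → Set P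

/-- The check-name of a ground model set `x` (as a name for a subset of the universe). -/
def checkPName {P : Type*} (x : ZFSet.{0}) : PName P := fun z => {_p : P | z ∈ x}

/-- The empty name. -/
def emptyPName {P : Type*} : PName P := fun _ => (∅ : Set P)

/-- The (strong) forcing relation `p ⊩ φ(v⃗, V⃗)` for second-order formulas over the
structure `(A, ∈)`, where the second-order variables are interpreted by `P`-names for
subsets of `A`.  The clauses are the standard ones: atomic first-order statements about
ground-model sets are decided outright, membership in a name holds iff it holds densely
often, negation means no extension forces the formula, existential quantifiers are
witnessed densely below the condition, and universal second-order quantifiers range over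
all names. -/
def Forces {P : Type*} [Preorder P] (A : ZFSet.{0}) :
    P → SOFormula → (ℕ → ZFSet.{0}) → (ℕ → PName P) → Prop
  | _, .memFF i j, v, _ => v i ∈ v j
  | _, .eqFF i j, v, _ => v i = v j
  | p, .memFS i j, v, V => v i ∈ A ∧ ∀ q ≤ p, ∃ r ≤ q, r ∈ V j (v i)
  | p, .not φ, v, V => ∀ q ≤ p, ¬ Forces A q φ v V
  | p, .and φ ψ, v, V => Forces A p φ v V ∧ Forces A p ψ v V
  | p, .allFO φ, v, V => ∀ a : ZFSet, a ∈ A → Forces A p φ (consF a v) V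
  | p, .exFO φ, v, V => ∀ q ≤ p, ∃ r ≤ q, ∃ a : ZFSet, a ∈ A ∧ Forces A r φ (consF a v) V
  | p, .allSO φ, v, V => ∀ σ : PName P, Forces A p φ v (consF σ V)
  | p, .exSO φ, v, V => ∀ q ≤ p, ∃ r ≤ q, ∃ σ : PName P, Forces A r φ v (consF σ V)

/-- `p ⊩ "α is Γ¹ₙ-reflecting"`, unfolded in the standard way: for all ground-model
parameters `β 0 < … < β (l-1) < α` and every `Γ¹ₙ` formula `φ`, whenever an extension `q`
of `p` forces `L_α ⊨ φ(β⃗)`, then densely below `q` some condition forces `L_{α'} ⊨ φ(β⃗)`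
for some `α'` with `β (l-1) < α' < α`. -/
def ForcesReflectingAt (P : Type*) [Preorder P] (p : P) (Γ : SOClass) (n : ℕ)
    (α : Ordinal.{0}) : Prop :=
  ∀ (l : ℕ) (β : ℕ → Ordinal.{0}),
    (∀ i j, i < j → j < l → β i < β j) → (∀ i, i < l → β i < α) →
    ∀ φ : SOFormula, IsGammaSO Γ n φ →
    ∀ q ≤ p, Forces (LSet α) q φ (paramVal l β) (fun _ => emptyPName) →
      ∀ q' ≤ q, ∃ r ≤ q', ∃ α' : Ordinal, (∀ i, i < l → β i < α') ∧ α' < α ∧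
        Forces (LSet α') r φ (paramVal l β) (fun _ => emptyPName)

/-- The forcing notion `P` forces that `α` is `Γ¹ₙ`-reflecting (equivalently, the maximal
condition forces it; for downwards closed relations this is the same as every condition
forcing it). -/
def ForcesReflecting (P : Type*) [Preorder P] (Γ : SOClass) (n : ℕ) (α : Ordinal.{0}) :
    Prop :=
  ∀ p : P, ForcesReflectingAt P p Γ n α

/-- `p ⊩ "α is not Γ¹ₙ-reflecting"`, unfolded: densely below `p` there are conditions `r`
together with ground-model witnesses `β⃗, φ` such that `r` forces `L_α ⊨ φ(β⃗)` and `r`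
forces `L_{α'} ⊭ φ(β⃗)` for every `α'` with `β (l-1) < α' < α`. -/
def ForcesNotReflectingAt (P : Type*) [Preorder P] (p : P) (Γ : SOClass) (n : ℕ)
    (α : Ordinal.{0}) : Prop :=
  ∀ q ≤ p, ∃ r ≤ q, ∃ (l : ℕ) (β : ℕ → Ordinal.{0}) (φ : SOFormula),
    (∀ i j, i < j → j < l → β i < β j) ∧ (∀ i, i < l → β i < α) ∧ IsGammaSO Γ n φ ∧
    Forces (LSet α) r φ (paramVal l β) (fun _ => emptyPName) ∧
    ∀ α' : Ordinal, (∀ i, i < l → β i < α') → α' < α →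
      Forces (LSet α') r (SOFormula.not φ) (paramVal l β) (fun _ => emptyPName)
/-! # The concrete forcing notions -/

/-- Cohen forcing `ℂ_X`: finite partial functions `X × ω → 2`, coded as finite functional
sets of pairs, ordered by reverse inclusion. -/
def CohenCond (X : Type) : Type :=
  {s : Finset ((X × ℕ) × Bool) // ∀ a b b', (a, b) ∈ s → (a, b') ∈ s → b = b'}

instance CohenCond.preorder (X : Type) : Preorder (CohenCond X) where
  le p q := q.1 ⊆ p.1
  le_refl p := Finset.Subset.refl _
  le_trans p q r h h' := Finset.Subset.trans h' h

/-- The maximal condition (empty function) of Cohen forcing. -/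
def CohenTop (X : Type) : CohenCond X :=
  ⟨∅, by intro a b b' h; simp at h⟩

/-- `p` is a perfect subtree of `2^{<ω}`. -/
def SacksTree (p : Set (List Bool)) : Prop :=
  p.Nonempty ∧ (∀ s t : List Bool, s <+: t → t ∈ p → s ∈ p) ∧
    ∀ t ∈ p, ∃ t' ∈ p, t <+: t' ∧ t' ++ [false] ∈ p ∧ t' ++ [true] ∈ p

/-- Sacks forcing: perfect subtrees of `2^{<ω}` ordered by inclusion. -/
def Sacks : Type := {p : Set (List Bool) // SacksTree p}

instance Sacks.preorder : Preorder Sacks where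
  le p q := p.1 ⊆ q.1
  le_refl p := subset_rfl
  le_trans p q r h h' := Set.Subset.trans h h'

/-- The maximal condition of Sacks forcing: the full binary tree. -/
def SacksTop : Sacks :=
  ⟨Set.univ, ⟨⟨[], trivial⟩, fun _ _ _ _ => trivial,
    fun t _ => ⟨t, trivial, List.prefix_refl t, trivial, trivial⟩⟩⟩

/-- `T` is a Laver tree: a subtree of `ω^{<ω}` with a stem below which every node splits
infinitely. -/
def LaverTree (T : Set (List ℕ)) : Prop :=
  T.Nonempty ∧ (∀ s t : List ℕ, s <+: t → t ∈ T → s ∈ T) ∧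
    ∃ s ∈ T, (∀ t ∈ T, t <+: s ∨ s <+: t) ∧
      ∀ t ∈ T, s <+: t → {n : ℕ | t ++ [n] ∈ T}.Infinite

/-- Laver forcing. -/
def Laver : Type := {T : Set (List ℕ) // LaverTree T}

instance Laver.preorder : Preorder Laver where
  le p q := p.1 ⊆ q.1
  le_refl p := subset_rfl
  le_trans p q r h h' := Set.Subset.trans h h'

/-- `T` is a superperfect (Miller) tree: a subtree of `ω^{<ω}` in which every node extends
to an infinitely splitting node. -/
def MillerTree (T : Set (List ℕ)) : Prop :=
  T.Nonempty ∧ (∀ s t : List ℕ, s <+: t → t ∈ T → s ∈ T) ∧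
    ∀ t ∈ T, ∃ t' ∈ T, t <+: t' ∧ {n : ℕ | t' ++ [n] ∈ T}.Infinite

/-- Miller forcing. -/
def Miller : Type := {T : Set (List ℕ) // MillerTree T}

instance Miller.preorder : Preorder Miller where
  le p q := p.1 ⊆ q.1
  le_refl p := subset_rfl
  le_trans p q r h h' := Set.Subset.trans h h'

/-- A constructible real: a constructible subset of `ω`. -/
def LReal : Type 1 := {x : ZFSet.{0} // x ⊆ ZFSet.omega ∧ Constructible x}

/-- The collapse forcing `ℙ = ℙ^L`: finite sequences of (constructible) reals ordered by
end extension. -/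
def CollapseP : Type 1 := List LReal

instance CollapseP.preorder : Preorder CollapseP where
  le p q := q <+: p
  le_refl p := List.prefix_refl p
  le_trans p q r h h' := List.IsPrefix.trans h' h
/-! # Forcing projective statements about a ground-model real -/

/-- The maximal condition of `ℂ_X` forces the projective statement `φ(ř)` about the
ground model real `r ⊆ ω` (placed as the second-order parameter of `φ`). -/
def CohenForcesProjTop (X : Type) (φ : SOFormula) (r : ZFSet.{0}) : Prop :=
  Forces ZFSet.omega (CohenTop X) φ (fun _ => ∅) (consF (checkPName r) (fun _ => emptyPName))
/-! # Countable linear orders and names for Lemma on `ℂ_{ω₁}` -/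

/-- The image of a Cohen condition under an order embedding of (countable) linear orders
(every countable linear order embeds into `ℚ`, so we represent countable linear orders as
subsets of `ℚ`). -/
def mapCohenCond {A B : Set ℚ} (e : A ↪o B) (p : CohenCond A) : CohenCond B :=
  ⟨p.1.image (fun q => ((e q.1.1, q.1.2), q.2)), by
    intro a b b' hb hb'
    simp only [Finset.mem_image] at hb hb'
    obtain ⟨⟨⟨x, k⟩, c⟩, hmem, heq⟩ := hb
    obtain ⟨⟨⟨x', k'⟩, c'⟩, hmem', heq'⟩ := hb'
    rw [Prod.ext_iff] at heq heq'
    obtain ⟨h1, h2⟩ := heq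
    obtain ⟨h1', h2'⟩ := heq'
    rw [Prod.ext_iff] at h1 h1'
    have hx : x = x' := e.injective (h1.1.trans h1'.1.symm)
    have hk : k = k' := h1.2.trans h1'.2.symm
    subst hx hk
    exact h2.symm.trans ((p.2 _ _ _ hmem hmem').trans h2')⟩

/-- Transfer of a `ℂ_A`-name along an order embedding `A ≤ B`, turning it into a
`ℂ_B`-name. -/
def transferName {A B : Set ℚ} (e : A ↪o B) (σ : PName (CohenCond A)) :
    PName (CohenCond B) :=
  fun z => {q : CohenCond B | ∃ p ∈ σ z, (mapCohenCond e p).1 ⊆ q.1}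

/-- The alternating quantifier-block statement of the lemma: given a list of quantifier
flags (`true` = "there is a countable linear order `B ≥ A` and a `ℂ_B`-name",
`false` = "for every countable linear order `B ≥ A` and every `ℂ_B`-name"), it ends with
"the maximal condition of `ℂ_{A_{n-1}}` forces `ψ` of the accumulated names". -/
def LOGame (ψ : SOFormula) : List Bool → (A : Set ℚ) → (ℕ → PName (CohenCond A)) → Prop
  | [], A, V => Forces ZFSet.omega (CohenTop A) ψ (fun _ => ∅) V
  | true :: bs, A, V => ∃ B : Set ℚ, B.Countable ∧ ∃ (e : A ↪o B)
      (σ : PName (CohenCond B)), LOGame ψ bs B (consF σ (fun n => transferName e (V n)))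
  | false :: bs, A, V => ∀ B : Set ℚ, B.Countable → ∀ (e : A ↪o B)
      (σ : PName (CohenCond B)), LOGame ψ bs B (consF σ (fun n => transferName e (V n)))

/-- `n` alternating second-order quantifiers (starting with `∃` if the flag is `true`)
prefixed to a matrix. -/
def altPrefix : Bool → ℕ → SOFormula → SOFormula
  | _, 0, ψ => ψ
  | true, n+1, ψ => .exSO (altPrefix false n ψ)
  | false, n+1, ψ => .allSO (altPrefix true n ψ)

/-- The corresponding list of quantifier flags. -/
def altBools : Bool → ℕ → List Bool
  | _, 0 => []
  | b, n+1 => b :: altBools (!b) n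

/-! ### Auxiliary development -/

section ForcingLemmas

variable {P : Type*} [Preorder P]

/-- The "pattern" of a set of conditions at a condition: densely below `p` there are
members of `σ`. -/
def Pat (σ : Set P) (p : P) : Prop := ∀ q ≤ p, ∃ r ≤ q, r ∈ σ

theorem Pat_mono {σ : Set P} {p q : P} (h : q ≤ p) (hp : Pat σ p) : Pat σ q :=
  fun q' hq' => hp q' (hq'.trans h)

theorem Forces_mono {A : ZFSet.{0}} {φ : SOFormula} :
    ∀ {v : ℕ → ZFSet.{0}} {V : ℕ → PName P} {p q : P}, q ≤ p →
      Forces A p φ v V → Forces A q φ v V := by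
  induction φ with
  | memFF i j => intro v V p q hq h; exact h
  | eqFF i j => intro v V p q hq h; exact h
  | memFS i j =>
    intro v V p q hq h
    exact ⟨h.1, fun q' hq' => h.2 q' (hq'.trans hq)⟩
  | not φ ih =>
    intro v V p q hq h
    exact fun q' hq' => h q' (hq'.trans hq)
  | and φ χ ih1 ih2 =>
    intro v V p q hq h
    exact ⟨ih1 hq h.1, ih2 hq h.2⟩
  | allFO φ ih =>
    intro v V p q hq h
    exact fun a ha => ih hq (h a ha)
  | exFO φ ih =>
    intro v V p q hq h
    exact fun q' hq' => h q' (hq'.trans hq)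
  | allSO φ ih =>
    intro v V p q hq h
    exact fun σ => ih hq (h σ)
  | exSO φ ih =>
    intro v V p q hq h
    exact fun q' hq' => h q' (hq'.trans hq)

theorem Forces_dense {A : ZFSet.{0}} {φ : SOFormula} :
    ∀ {v : ℕ → ZFSet.{0}} {V : ℕ → PName P} {p : P},
      (∀ q ≤ p, ∃ r ≤ q, Forces A r φ v V) → Forces A p φ v V := by
  induction φ with
  | memFF i j =>
    intro v V p H
    obtain ⟨r, _, hr⟩ := H p le_rfl; exact hr
  | eqFF i j =>
    intro v V p H
    obtain ⟨r, _, hr⟩ := H p le_rfl; exact hr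
  | memFS i j =>
    intro v V p H
    constructor
    · obtain ⟨r, _, hr⟩ := H p le_rfl; exact hr.1
    · intro q hq
      obtain ⟨r, hrq, hr⟩ := H q hq
      obtain ⟨s, hs, hsV⟩ := hr.2 r le_rfl
      exact ⟨s, hs.trans hrq, hsV⟩
  | not φ ih =>
    intro v V p H q hq hF
    obtain ⟨r, hrq, hr⟩ := H q hq
    exact hr r le_rfl (Forces_mono hrq hF)
  | and φ χ ih1 ih2 =>
    intro v V p H
    exact ⟨ih1 fun q hq => (H q hq).imp fun r hr => ⟨hr.1, hr.2.1⟩,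
           ih2 fun q hq => (H q hq).imp fun r hr => ⟨hr.1, hr.2.2⟩⟩
  | allFO φ ih =>
    intro v V p H a ha
    exact ih fun q hq => (H q hq).imp fun r hr => ⟨hr.1, hr.2 a ha⟩
  | exFO φ ih =>
    intro v V p H q hq
    obtain ⟨r, hrq, hr⟩ := H q hq
    obtain ⟨s, hsr, a, ha, hF⟩ := hr r le_rfl
    exact ⟨s, hsr.trans hrq, a, ha, hF⟩
  | allSO φ ih =>
    intro v V p H σ
    exact ih fun q hq => (H q hq).imp fun r hr => ⟨hr.1, hr.2 σ⟩
  | exSO φ ih =>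
    intro v V p H q hq
    obtain ⟨r, hrq, hr⟩ := H q hq
    obtain ⟨s, hsr, σ, hF⟩ := hr r le_rfl
    exact ⟨s, hsr.trans hrq, σ, hF⟩

/-- The forcing relation depends on the names only through their patterns (below the
relevant condition). -/
theorem Forces_congr {A : ZFSet.{0}} {φ : SOFormula} :
    ∀ {v : ℕ → ZFSet.{0}} {V V' : ℕ → PName P} {p : P},
      (∀ j z, z ∈ A → ∀ q ≤ p, (Pat (V j z) q ↔ Pat (V' j z) q)) →
      (Forces A p φ v V ↔ Forces A p φ v V') := by
  induction φ with
  | memFF i j => intro v V V' p hm; exact Iff.rfl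
  | eqFF i j => intro v V V' p hm; exact Iff.rfl
  | memFS i j =>
    intro v V V' p hm
    show (v i ∈ A ∧ _) ↔ (v i ∈ A ∧ _)
    exact and_congr_right fun h => hm j (v i) h p le_rfl
  | not φ ih =>
    intro v V V' p hm
    exact forall₂_congr fun q hq =>
      not_congr (ih fun j z hz q' hq' => hm j z hz q' (hq'.trans hq))
  | and φ χ ih1 ih2 =>
    intro v V V' p hm
    exact and_congr (ih1 hm) (ih2 hm)
  | allFO φ ih =>
    intro v V V' p hm
    exact forall₂_congr fun a ha => ih hm
  | exFO φ ih =>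
    intro v V V' p hm
    refine forall₂_congr fun q hq => exists_congr fun r => and_congr_right fun hr => ?_
    exact exists_congr fun a => and_congr_right fun ha =>
      ih fun j z hz q' hq' => hm j z hz q' (hq'.trans (hr.trans hq))
  | allSO φ ih =>
    intro v V V' p hm
    refine forall_congr' fun σ => ih ?_
    intro j z hz q hq
    cases j with
    | zero => exact Iff.rfl
    | succ j => exact hm j z hz q hq
  | exSO φ ih =>
    intro v V V' p hm
    refine forall₂_congr fun q hq => exists_congr fun r => and_congr_right fun hr => ?_
    refine exists_congr fun σ => ih ?_
    intro j z hz q' hq'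
    cases j with
    | zero => exact Iff.rfl
    | succ j => exact hm j z hz q' (hq'.trans (hr.trans hq))

/-- Compatibility of conditions. -/
def Compat (p q : P) : Prop := ∃ s, s ≤ p ∧ s ≤ q

theorem Compat.symm {p q : P} (h : Compat p q) : Compat q p := by
  obtain ⟨s, h1, h2⟩ := h; exact ⟨s, h2, h1⟩

/-- Existence of a maximal antichain inside a given set of conditions. -/
theorem exists_maximal_antichain (D : Set P) :
    ∃ X ⊆ D, (∀ x ∈ X, ∀ y ∈ X, x ≠ y → ¬Compat x y) ∧ ∀ d ∈ D, ∃ x ∈ X, Compat d x := by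
  have hzorn : ∀ c ⊆ {Y : Set P | Y ⊆ D ∧ ∀ x ∈ Y, ∀ y ∈ Y, x ≠ y → ¬Compat x y},
      IsChain (· ⊆ ·) c → ∃ ub ∈ {Y : Set P | Y ⊆ D ∧ ∀ x ∈ Y, ∀ y ∈ Y, x ≠ y → ¬Compat x y},
      ∀ s ∈ c, s ⊆ ub := by
    intro c hc hchain
    refine ⟨⋃₀ c, ⟨?_, ?_⟩, fun s hs => Set.subset_sUnion_of_mem hs⟩
    · intro x hx
      obtain ⟨Y, hY, hxY⟩ := hx
      exact (hc hY).1 hxY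
    · intro x hx y hy hxy
      obtain ⟨Y1, hY1, hx1⟩ := hx
      obtain ⟨Y2, hY2, hy2⟩ := hy
      rcases hchain.total hY1 hY2 with h | h
      · exact (hc hY2).2 x (h hx1) y hy2 hxy
      · exact (hc hY1).2 x hx1 y (h hy2) hxy
  obtain ⟨X, hX, hmax⟩ := zorn_subset
    {Y : Set P | Y ⊆ D ∧ ∀ x ∈ Y, ∀ y ∈ Y, x ≠ y → ¬Compat x y} hzorn
  refine ⟨X, hX.1, hX.2, ?_⟩
  intro d hd
  by_contra hno
  push_neg at hno
  have hdX : d ∉ X := fun h => hno d h ⟨d, le_rfl, le_rfl⟩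
  have hins : insert d X ∈
      {Y : Set P | Y ⊆ D ∧ ∀ x ∈ Y, ∀ y ∈ Y, x ≠ y → ¬Compat x y} := by
    constructor
    · intro x hx
      rcases hx with rfl | hx
      · exact hd
      · exact hX.1 hx
    · intro x hx y hy hxy
      rcases hx with rfl | hx
      · rcases hy with rfl | hy
        · exact absurd rfl hxy
        · exact fun hc => hno y hy hc
      · rcases hy with rfl | hy
        · exact fun hc => hno x hx hc.symm
        · exact hX.2 x hx y hy hxy
  exact hdX (hmax hins (Set.subset_insert d X) (Set.mem_insert d X))

/-- Mixing over a maximal antichain: if densely below `p₀` there are conditions forcing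
`φ` with some name plugged in, then a single mixed name is forced by `p₀` itself. -/
theorem exists_mix {A : ZFSet.{0}} {φ : SOFormula} {v : ℕ → ZFSet.{0}}
    {V : ℕ → PName P} {p₀ : P}
    (H : ∀ q ≤ p₀, ∃ r ≤ q, ∃ σ : PName P, Forces A r φ v (consF σ V)) :
    ∃ σ : PName P, Forces A p₀ φ v (consF σ V) := by
  classical
  set D : Set P := {r | r ≤ p₀ ∧ ∃ σ : PName P, Forces A r φ v (consF σ V)} with hD
  obtain ⟨X, hXD, hXanti, hXmax⟩ := exists_maximal_antichain D
  set σof : P → PName P := fun x =>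
    if h : ∃ σ : PName P, Forces A x φ v (consF σ V) then h.choose else fun _ => ∅ with hσof
  have hσofF : ∀ x ∈ X, Forces A x φ v (consF (σof x) V) := by
    intro x hx
    have hx' := (hXD hx).2
    simp only [hσof]
    have e : σof x = hx'.choose := dif_pos hx'
    exact cast (congrArg (fun σ => Forces A x φ v (consF σ V)) e.symm) hx'.choose_spec
  refine ⟨fun z => {s | ∃ x, x ∈ X ∧ s ≤ x ∧ s ∈ σof x z}, ?_⟩
  apply Forces_dense
  intro q hq
  obtain ⟨r₀, hr₀q, σ₀, hF₀⟩ := H q hq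
  have hr₀D : r₀ ∈ D := ⟨hr₀q.trans hq, σ₀, hF₀⟩
  obtain ⟨x, hxX, s, hsr₀, hsx⟩ := hXmax r₀ hr₀D
  refine ⟨s, hsr₀.trans hr₀q, ?_⟩
  refine Forces_mono hsx ?_
  refine (Forces_congr ?_).mpr (hσofF x hxX)
  intro j z hz q' hq'
  cases j with
  | zero =>
    show Pat {s | ∃ x', x' ∈ X ∧ s ≤ x' ∧ s ∈ σof x' z} q' ↔ Pat (σof x z) q'
    constructor
    · intro hP q'' hq''
      obtain ⟨r, hr, x', hx'X, hrx', hrσ⟩ := hP q'' hq''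
      have hxx' : x' = x := by
        by_contra hne
        exact hXanti x' hx'X x hxX hne ⟨r, hrx', (hr.trans hq'').trans hq'⟩
      exact ⟨r, hr, hxx' ▸ hrσ⟩
    · intro hP q'' hq''
      obtain ⟨r, hr, hrσ⟩ := hP q'' hq''
      exact ⟨r, hr, x, hxX, (hr.trans hq'').trans hq', hrσ⟩
  | succ j => exact Iff.rfl

end ForcingLemmas


section CohenAux

variable {X Y Z : Type}

/-- Lift an injection of index sets to entries of Cohen conditions. -/
def liftFn (f : X → Y) : (X × ℕ) × Bool → (Y × ℕ) × Bool := fun t => ((f t.1.1, t.1.2), t.2)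

theorem liftFn_injective {f : X → Y} (hf : Function.Injective f) :
    Function.Injective (liftFn f) := by
  rintro ⟨⟨x, n⟩, b⟩ ⟨⟨x', n'⟩, b'⟩ h
  simp only [liftFn, Prod.mk.injEq] at h
  obtain ⟨⟨h1, h2⟩, h3⟩ := h
  simp [hf h1, h2, h3]

/-- The image of a Cohen condition under an injection of index sets. -/
noncomputable def mapC (f : X → Y) (hf : Function.Injective f) (p : CohenCond X) :
    CohenCond Y :=
  ⟨p.1.image (liftFn f), by
    intro a b b' hb hb'
    obtain ⟨s, hmem, heq⟩ := Finset.mem_image.mp hb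
    obtain ⟨s', hmem', heq'⟩ := Finset.mem_image.mp hb'
    have e1 : (f s.1.1, s.1.2) = a := congrArg Prod.fst heq
    have e1' : (f s'.1.1, s'.1.2) = a := congrArg Prod.fst heq'
    have hp := Prod.ext_iff.mp (e1.trans e1'.symm)
    have h1 : f s.1.1 = f s'.1.1 := hp.1
    have h2 : s.1.2 = s'.1.2 := hp.2
    have hb2 : s.2 = b := congrArg Prod.snd heq
    have hb2' : s'.2 = b' := congrArg Prod.snd heq'
    have hs1 : s.1 = s'.1 := Prod.ext (hf h1) h2
    rw [← hb2, ← hb2']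
    refine p.2 s.1 s.2 s'.2 ?_ ?_
    · rw [Prod.mk.eta]; exact hmem
    · rw [hs1, Prod.mk.eta]; exact hmem'⟩

theorem mem_mapC {f : X → Y} {hf : Function.Injective f} {p : CohenCond X}
    {t : (Y × ℕ) × Bool} : t ∈ (mapC f hf p).1 ↔ ∃ s ∈ p.1, liftFn f s = t :=
  Finset.mem_image

/-- Restriction of a Cohen condition along an injection of index sets. -/
noncomputable def restC (f : X → Y) (hf : Function.Injective f) (q : CohenCond Y) : CohenCond X :=
  ⟨q.1.preimage (liftFn f) (liftFn_injective hf).injOn, by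
    intro a b b' hb hb'
    rw [Finset.mem_preimage] at hb hb'
    exact q.2 (f a.1, a.2) b b' hb hb'⟩

theorem mem_restC {f : X → Y} {hf : Function.Injective f} {q : CohenCond Y}
    {s : (X × ℕ) × Bool} : s ∈ (restC f hf q).1 ↔ liftFn f s ∈ q.1 := by
  show s ∈ q.1.preimage (liftFn f) (liftFn_injective hf).injOn ↔ _
  exact Finset.mem_preimage

theorem restC_mono {f : X → Y} {hf : Function.Injective f} {Q Q' : CohenCond Y}
    (h : Q ≤ Q') : restC f hf Q ≤ restC f hf Q' := by
  intro s hs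
  exact mem_restC.mpr (h (mem_restC.mp hs))

theorem mapC_mono {f : X → Y} {hf : Function.Injective f} {p p' : CohenCond X}
    (h : p ≤ p') : mapC f hf p ≤ mapC f hf p' :=
  Finset.image_subset_image h

theorem restC_mapC {f : X → Y} {hf : Function.Injective f} (p : CohenCond X) :
    restC f hf (mapC f hf p) = p := by
  apply Subtype.ext
  ext s
  rw [mem_restC, mem_mapC]
  constructor
  · rintro ⟨s', hs', heq⟩
    rwa [← liftFn_injective hf heq]
  · intro h
    exact ⟨s, h, rfl⟩

theorem restC_top {f : X → Y} {hf : Function.Injective f} :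
    restC f hf (CohenTop Y) = CohenTop X := by
  apply Subtype.ext
  ext s
  rw [mem_restC]
  simp [CohenTop]

theorem restC_comp {f : X → Y} {g : Y → Z} {hf : Function.Injective f}
    {hg : Function.Injective g} (Q : CohenCond Z) :
    restC f hf (restC g hg Q) = restC (g ∘ f) (hg.comp hf) Q := by
  apply Subtype.ext
  ext s
  rw [mem_restC, mem_restC, mem_restC]
  rfl

theorem restC_congr {f f' : X → Y} {hf : Function.Injective f}
    {hf' : Function.Injective f'} (h : f = f') (Q : CohenCond Y) :
    restC f hf Q = restC f' hf' Q := by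
  subst h; rfl

/-- Amalgamation of a big condition with a small one refining its restriction. -/
noncomputable def amalg (f : X → Y) (hf : Function.Injective f) (Q : CohenCond Y)
    (q : CohenCond X) (h : q ≤ restC f hf Q) : CohenCond Y :=
  ⟨Q.1 ∪ (mapC f hf q).1, by
    intro a b b' hb hb'
    rcases Finset.mem_union.mp hb with hb1 | hb1 <;>
      rcases Finset.mem_union.mp hb' with hb2 | hb2
    · exact Q.2 a b b' hb1 hb2
    · obtain ⟨s, hs, heq⟩ := mem_mapC.mp hb2
      have ha : (f s.1.1, s.1.2) = a := congrArg Prod.fst heq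
      have hs2 : s.2 = b' := congrArg Prod.snd heq
      have hmemq : (s.1, b) ∈ q.1 := by
        apply h
        rw [mem_restC]
        show ((f s.1.1, s.1.2), b) ∈ Q.1
        rw [ha]
        exact hb1
      rw [← hs2]
      refine q.2 s.1 b s.2 hmemq ?_
      rw [Prod.mk.eta]; exact hs
    · obtain ⟨s, hs, heq⟩ := mem_mapC.mp hb1
      have ha : (f s.1.1, s.1.2) = a := congrArg Prod.fst heq
      have hs2 : s.2 = b := congrArg Prod.snd heq
      have hmemq : (s.1, b') ∈ q.1 := by
        apply h
        rw [mem_restC]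
        show ((f s.1.1, s.1.2), b') ∈ Q.1
        rw [ha]
        exact hb2
      rw [← hs2]
      refine q.2 s.1 s.2 b' ?_ hmemq
      rw [Prod.mk.eta]; exact hs
    · exact (mapC f hf q).2 a b b' hb1 hb2⟩

theorem amalg_le {f : X → Y} {hf : Function.Injective f} {Q : CohenCond Y}
    {q : CohenCond X} (h : q ≤ restC f hf Q) : amalg f hf Q q h ≤ Q :=
  Finset.subset_union_left

theorem amalg_le_mapC {f : X → Y} {hf : Function.Injective f} {Q : CohenCond Y}
    {q : CohenCond X} (h : q ≤ restC f hf Q) : amalg f hf Q q h ≤ mapC f hf q :=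
  Finset.subset_union_right

theorem restC_amalg {f : X → Y} {hf : Function.Injective f} {Q : CohenCond Y}
    {q : CohenCond X} (h : q ≤ restC f hf Q) : restC f hf (amalg f hf Q q h) = q := by
  apply Subtype.ext
  ext s
  rw [mem_restC]
  show liftFn f s ∈ Q.1 ∪ (mapC f hf q).1 ↔ _
  rw [Finset.mem_union]
  constructor
  · rintro (h1 | h1)
    · exact h (mem_restC.mpr h1)
    · obtain ⟨s', hs', heq⟩ := mem_mapC.mp h1
      rwa [← liftFn_injective hf heq]
  · intro hs
    exact Or.inr (mem_mapC.mpr ⟨s, hs, rfl⟩)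

/-- The first coordinates occurring in a condition. -/
noncomputable def suppC (p : CohenCond Y) : Finset Y := p.1.image fun t => t.1.1

theorem mapC_restC {f : X → Y} {hf : Function.Injective f} {Q : CohenCond Y}
    (hsupp : ∀ y ∈ suppC Q, y ∈ Set.range f) : mapC f hf (restC f hf Q) = Q := by
  apply Subtype.ext
  ext t
  rw [mem_mapC]
  constructor
  · rintro ⟨s, hs, rfl⟩
    exact mem_restC.mp hs
  · intro ht
    obtain ⟨x, hx⟩ := hsupp t.1.1 (Finset.mem_image.mpr ⟨t, ht, rfl⟩)
    refine ⟨((x, t.1.2), t.2), ?_, ?_⟩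
    · rw [mem_restC]
      show ((f x, t.1.2), t.2) ∈ Q.1
      rw [hx]
      convert ht
    · show ((f x, t.1.2), t.2) = t
      rw [hx]

/-- Downward closure of a set of conditions. -/
def DSet (σ : Set (CohenCond Y)) : Set (CohenCond Y) := {p | ∃ s ∈ σ, p ≤ s}

/-- Transfer of a set of conditions along an injection (downward closure of the image). -/
def tSet (f : X → Y) (hf : Function.Injective f) (σ : Set (CohenCond X)) :
    Set (CohenCond Y) := {q | ∃ p ∈ σ, (mapC f hf p).1 ⊆ q.1}

/-- Pullback of a set of conditions along an injection. -/
def pbSet (f : X → Y) (hf : Function.Injective f) (σ : Set (CohenCond X)) :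
    Set (CohenCond Y) := {Q | restC f hf Q ∈ σ}

theorem DSet_subset_iff {σ : Set (CohenCond Y)} {p : CohenCond Y} :
    p ∈ DSet σ ↔ ∃ s ∈ σ, p ≤ s := Iff.rfl

theorem dc_DSet {σ : Set (CohenCond Y)} {p q : CohenCond Y} (h : p ≤ q)
    (hq : q ∈ DSet σ) : p ∈ DSet σ := by
  obtain ⟨s, hs, hqs⟩ := hq
  exact ⟨s, hs, h.trans hqs⟩

theorem DSet_of_dc {σ : Set (CohenCond Y)}
    (hdc : ∀ p q : CohenCond Y, p ≤ q → q ∈ σ → p ∈ σ) : DSet σ = σ := by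
  ext p
  exact ⟨fun ⟨s, hs, hps⟩ => hdc p s hps hs, fun h => ⟨p, h, le_rfl⟩⟩

theorem DSet_DSet {σ : Set (CohenCond Y)} : DSet (DSet σ) = DSet σ :=
  DSet_of_dc fun p q h hq => dc_DSet h hq

theorem dc_tSet {f : X → Y} {hf : Function.Injective f} {σ : Set (CohenCond X)}
    {p q : CohenCond Y} (h : p ≤ q) (hq : q ∈ tSet f hf σ) : p ∈ tSet f hf σ := by
  obtain ⟨s, hs, hsub⟩ := hq
  exact ⟨s, hs, hsub.trans h⟩

theorem tSet_DSet {f : X → Y} {hf : Function.Injective f} {σ : Set (CohenCond X)} :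
    tSet f hf (DSet σ) = tSet f hf σ := by
  ext q
  constructor
  · rintro ⟨p, ⟨s, hs, hps⟩, hsub⟩
    exact ⟨s, hs, Finset.Subset.trans (mapC_mono hps) hsub⟩
  · rintro ⟨p, hp, hsub⟩
    exact ⟨p, ⟨p, hp, le_rfl⟩, hsub⟩

theorem pat_tSet {f : X → Y} {hf : Function.Injective f} {σ : Set (CohenCond X)}
    {Q : CohenCond Y} : Pat (tSet f hf σ) Q ↔ Pat (DSet σ) (restC f hf Q) := by
  constructor
  · intro hP q hq
    obtain ⟨R, hRQ', p, hp, hmap⟩ := hP (amalg f hf Q q hq) (amalg_le hq)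
    refine ⟨restC f hf R, ?_, p, hp, ?_⟩
    · have := restC_mono (hf := hf) hRQ'
      rwa [restC_amalg] at this
    · intro t ht
      exact mem_restC.mpr (hmap (mem_mapC.mpr ⟨t, ht, rfl⟩))
  · intro hP Q' hQ'
    obtain ⟨r, hr, s, hs, hrs⟩ := hP (restC f hf Q') (restC_mono hQ')
    exact ⟨amalg f hf Q' r hr, amalg_le hr, s, hs,
      Finset.Subset.trans (mapC_mono hrs) (amalg_le_mapC hr)⟩

theorem pat_pbSet {f : X → Y} {hf : Function.Injective f} {σ : Set (CohenCond X)}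
    {Q : CohenCond Y} : Pat (pbSet f hf σ) Q ↔ Pat σ (restC f hf Q) := by
  constructor
  · intro hP q hq
    obtain ⟨R, hRQ', hRin⟩ := hP (amalg f hf Q q hq) (amalg_le hq)
    refine ⟨restC f hf R, ?_, hRin⟩
    have := restC_mono (hf := hf) hRQ'
    rwa [restC_amalg] at this
  · intro hP Q' hQ'
    obtain ⟨r, hr, hrin⟩ := hP (restC f hf Q') (restC_mono hQ')
    refine ⟨amalg f hf Q' r hr, amalg_le hr, ?_⟩
    show restC f hf (amalg f hf Q' r hr) ∈ σ
    rwa [restC_amalg]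

theorem transferName_apply {A B : Set ℚ} (e : A ↪o B) (σ : PName (CohenCond A)) (z : ZFSet) :
    transferName e σ z = tSet (fun a => e a) (fun a a' h => e.injective h) (σ z) := by
  have key : ∀ p : CohenCond A, (mapCohenCond e p).1 = (mapC (fun a => e a)
      (fun a a' h => e.injective h) p).1 := by
    intro p
    ext t
    simp only [mapCohenCond, mapC, Finset.mem_image, liftFn]
  ext q
  show (∃ p ∈ σ z, (mapCohenCond e p).1 ⊆ q.1) ↔ ∃ p ∈ σ z, (mapC _ _ p).1 ⊆ q.1
  simp only [key]

end CohenAux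


section TransferLemma

variable {X Y : Type}

/-- Transfer of the forcing relation for arithmetic formulas along an injection of the
index sets of the Cohen forcings, given matching name vectors. -/
theorem Forces_transfer {f : X → Y} (hf : Function.Injective f) {φ : SOFormula} :
    ∀ (_hφ : NoSOQuant φ) {v : ℕ → ZFSet.{0}} {U : ℕ → PName (CohenCond Y)}
      {V : ℕ → PName (CohenCond X)},
      (∀ j z, z ∈ ZFSet.omega → ∀ Q, Pat (U j z) Q ↔ Pat (V j z) (restC f hf Q)) →
      ∀ Q, Forces ZFSet.omega Q φ v U ↔ Forces ZFSet.omega (restC f hf Q) φ v V := by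
  induction φ with
  | memFF i j => intro hφ v U V hm Q; exact Iff.rfl
  | eqFF i j => intro hφ v U V hm Q; exact Iff.rfl
  | memFS i j =>
    intro hφ v U V hm Q
    show (v i ∈ ZFSet.omega ∧ _) ↔ (v i ∈ ZFSet.omega ∧ _)
    exact and_congr_right fun h => hm j (v i) h Q
  | not φ ih =>
    intro hφ v U V hm Q
    constructor
    · intro hb q hq
      have := hb (amalg f hf Q q hq) (amalg_le hq)
      rw [ih hφ hm (amalg f hf Q q hq), restC_amalg] at this
      exact this
    · intro hs Q' hQ'
      rw [ih hφ hm Q']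
      exact hs (restC f hf Q') (restC_mono hQ')
  | and φ χ ih1 ih2 =>
    intro hφ v U V hm Q
    exact and_congr (ih1 hφ.1 hm Q) (ih2 hφ.2 hm Q)
  | allFO φ ih =>
    intro hφ v U V hm Q
    exact forall₂_congr fun a ha => ih hφ hm Q
  | exFO φ ih =>
    intro hφ v U V hm Q
    constructor
    · intro hb q hq
      obtain ⟨R, hR, a, ha, hF⟩ := hb (amalg f hf Q q hq) (amalg_le hq)
      refine ⟨restC f hf R, ?_, a, ha, (ih hφ hm R).mp hF⟩
      have := restC_mono (hf := hf) hR
      rwa [restC_amalg] at this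
    · intro hs Q' hQ'
      obtain ⟨r, hr, a, ha, hF⟩ := hs (restC f hf Q') (restC_mono hQ')
      refine ⟨amalg f hf Q' r hr, amalg_le hr, a, ha, ?_⟩
      rw [ih hφ hm (amalg f hf Q' r hr), restC_amalg]
      exact hF
  | allSO φ ih => intro hφ; exact hφ.elim
  | exSO φ ih => intro hφ; exact hφ.elim

end TransferLemma


section CCC

variable {Y : Type}

/-- Cohen forcing over an index set that injects into `2^ω` is σ-centered, hence ccc:
every antichain is countable. -/
theorem antichain_countable (j : Y → ℕ → Bool) (hj : Function.Injective j)
    {X : Set (CohenCond Y)} (hX : ∀ p ∈ X, ∀ q ∈ X, p ≠ q → ¬Compat p q) :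
    X.Countable := by
  classical
  -- truncation of the code of `y` at level `m`
  set tr : ℕ → Y → List Bool := fun m y => (List.range m).map (j y) with htr
  -- a level separating two distinct codes
  set dOf : Y → Y → ℕ := fun y y' =>
    if h : j y = j y' then 0 else Nat.find (Function.ne_iff.mp h) + 1 with hdOf
  have hdOf_spec : ∀ y y', y ≠ y' → ∃ k, k < dOf y y' ∧ j y k ≠ j y' k := by
    intro y y' hne
    have hne' : j y ≠ j y' := fun h => hne (hj h)
    refine ⟨Nat.find (Function.ne_iff.mp hne'), ?_, Nat.find_spec (Function.ne_iff.mp hne')⟩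
    rw [hdOf]
    simp only [dif_neg hne']
    exact Nat.lt_succ_self _
  set mOf : CohenCond Y → ℕ := fun p =>
    (p.1.sup fun t => p.1.sup fun t' => dOf t.1.1 t'.1.1) with hmOf
  have hmOf_spec : ∀ (p : CohenCond Y), ∀ t ∈ p.1, ∀ t' ∈ p.1, t.1.1 ≠ t'.1.1 →
      tr (mOf p) t.1.1 ≠ tr (mOf p) t'.1.1 := by
    intro p t ht t' ht' hne heq
    obtain ⟨k, hk, hkne⟩ := hdOf_spec t.1.1 t'.1.1 hne
    have hkm : k < mOf p := lt_of_lt_of_le hk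
      (le_trans (Finset.le_sup (f := fun t' => dOf t.1.1 t'.1.1) ht')
        (Finset.le_sup (f := fun t => p.1.sup fun t' => dOf t.1.1 t'.1.1) ht))
    apply hkne
    have := congrArg (fun l => l[k]?) heq
    simpa [htr, List.getElem?_map, List.getElem?_range, hkm] using this
  set cl : CohenCond Y → ℕ × Finset ((List Bool × ℕ) × Bool) := fun p =>
    (mOf p, p.1.image fun t => ((tr (mOf p) t.1.1, t.1.2), t.2)) with hcl
  have key : ∀ p q : CohenCond Y, cl p = cl q → Compat p q := by
    intro p q hpq
    have hm : mOf p = mOf q := congrArg Prod.fst hpq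
    have himg : p.1.image (fun t => ((tr (mOf p) t.1.1, t.1.2), t.2)) =
        q.1.image fun t => ((tr (mOf q) t.1.1, t.1.2), t.2) := congrArg Prod.snd hpq
    have main : ∀ a b b', (a, b) ∈ p.1 → (a, b') ∈ q.1 → b = b' := by
      intro a b b' hb hb'
      have hmem : ((tr (mOf q) a.1, a.2), b) ∈
          q.1.image fun t => ((tr (mOf q) t.1.1, t.1.2), t.2) := by
        rw [← himg]
        exact Finset.mem_image.mpr ⟨(a, b), hb, by rw [hm]⟩
      obtain ⟨t', ht', heq⟩ := Finset.mem_image.mp hmem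
      have ht'2 : t'.2 = b := congrArg (fun u => u.2) heq
      have ht'12 : t'.1.2 = a.2 := congrArg (fun u => u.1.2) heq
      have ht'tr : tr (mOf q) t'.1.1 = tr (mOf q) a.1 := congrArg (fun u => u.1.1) heq
      by_cases hcase : t'.1.1 = a.1
      · have ht'' : t' = (a, b) := by
          apply Prod.ext
          · apply Prod.ext
            · exact hcase
            · exact ht'12
          · exact ht'2
        rw [ht''] at ht'
        exact q.2 a b b' ht' hb'
      · exact absurd ht'tr
          (hmOf_spec q t' ht' (a, b') hb' hcase)
    have main' : ∀ a b b', (a, b) ∈ q.1 → (a, b') ∈ p.1 → b = b' := by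
      intro a b b' hb hb'
      exact (main a b' b hb' hb).symm
    refine ⟨⟨p.1 ∪ q.1, ?_⟩, ?_, ?_⟩
    · intro a b b' hb hb'
      rcases Finset.mem_union.mp hb with h1 | h1 <;>
        rcases Finset.mem_union.mp hb' with h2 | h2
      · exact p.2 a b b' h1 h2
      · exact main a b b' h1 h2
      · exact main' a b b' h1 h2
      · exact q.2 a b b' h1 h2
    · exact Finset.subset_union_left
    · exact Finset.subset_union_right
  -- the class function is injective on the antichain
  have hinj : Function.Injective (fun x : X => cl x.1) := by
    intro x y hxy
    by_contra hne
    have hne' : (x : CohenCond Y) ≠ y := fun h => hne (Subtype.ext h)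
    exact hX x.1 x.2 y.1 y.2 hne' (key x.1 y.1 hxy)
  have : Countable X := hinj.countable
  exact Set.countable_coe_iff.mp this

/-- Every pattern over Cohen forcing (with small index set) is generated by a countable
set of conditions. -/
theorem exists_countable_pat_basis (j : Y → ℕ → Bool) (hj : Function.Injective j)
    (σ : Set (CohenCond Y)) :
    ∃ X : Set (CohenCond Y), X.Countable ∧ ∀ Q, (Pat σ Q ↔ Pat (DSet X) Q) := by
  have hFdc : ∀ Q' Q : CohenCond Y, Q' ≤ Q → Pat σ Q → Pat σ Q' := fun Q' Q h hQ =>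
    Pat_mono h hQ
  obtain ⟨X, hXF, hXanti, hXmax⟩ := exists_maximal_antichain {Q : CohenCond Y | Pat σ Q}
  refine ⟨X, antichain_countable j hj hXanti, ?_⟩
  intro Q
  constructor
  · intro hQ q hq
    obtain ⟨x, hx, s, hsq, hsx⟩ := hXmax q (hFdc q Q hq hQ)
    exact ⟨s, hsq, x, hx, hsx⟩
  · intro hP q hq
    obtain ⟨r, hr, x, hx, hrx⟩ := hP q hq
    have hrF : Pat σ r := hFdc r x hrx (hXF hx)
    obtain ⟨s, hs, hsσ⟩ := hrF r le_rfl
    exact ⟨s, hs.trans hr, hsσ⟩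

end CCC


section Helpers

/-- Enumeration of the elements of `ω` in `ZFSet`. -/
theorem mem_omega_enum {z : ZFSet.{0}} (hz : z ∈ ZFSet.omega) :
    ∃ n : ℕ, z = ZFSet.mk (PSet.ofNat n) := by
  obtain ⟨x, rfl⟩ := Quotient.exists_rep z
  obtain ⟨b, hb⟩ := ZFSet.mk_mem_iff.mp hz
  obtain ⟨n⟩ := b
  exact ⟨n, ZFSet.sound hb⟩

/-- Into an uncountable type, a countable family can be injected avoiding any given
countable set. -/
theorem inj_avoid {Ω : Type} (hbig : Cardinal.aleph0 < Cardinal.mk Ω) (Z : Type)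
    [Countable Z] (s : Set Ω) (hs : s.Countable) :
    ∃ w : Z → Ω, Function.Injective w ∧ ∀ z, w z ∉ s := by
  have h1 : ¬(sᶜ : Set Ω).Countable := by
    intro hc
    have huniv : (Set.univ : Set Ω).Countable := by
      have := hs.union hc
      rwa [Set.union_compl_self] at this
    haveI : Countable Ω := Set.countable_univ_iff.mp huniv
    exact absurd Cardinal.mk_le_aleph0 (not_le.mpr hbig)
  haveI h2 : Infinite ↥(sᶜ) := by
    rw [Set.infinite_coe_iff]
    exact fun hf => h1 hf.countable
  have hle : Cardinal.mk Z ≤ Cardinal.mk ↥(sᶜ) :=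
    le_trans Cardinal.mk_le_aleph0 (Cardinal.aleph0_le_mk _)
  obtain ⟨emb⟩ := (Cardinal.le_def _ _).mp hle
  exact ⟨fun z => (emb z).1, fun a b h => emb.injective (Subtype.ext h),
    fun z => (emb z).2⟩

theorem nonempty_equiv_of_ctbl_inf (A B : Type) [Countable A] [Infinite A] [Countable B]
    [Infinite B] : Nonempty (A ≃ B) := by
  apply Cardinal.eq.mp
  exact le_antisymm (le_trans Cardinal.mk_le_aleph0 (Cardinal.aleph0_le_mk B))
    (le_trans Cardinal.mk_le_aleph0 (Cardinal.aleph0_le_mk A))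

/-- Any injection of `A` into an uncountable type extends along any order embedding
`A ↪o B` of countable linear orders. -/
theorem exists_ext_inj {A B : Set ℚ} (e : A ↪o B) {Ω : Type}
    (hbig : Cardinal.aleph0 < Cardinal.mk Ω) (f : A → Ω) (hf : Function.Injective f) :
    ∃ g : B → Ω, Function.Injective g ∧ ∀ a, g (e a) = f a := by
  classical
  obtain ⟨w, hwinj, hw⟩ := inj_avoid hbig ↥B (Set.range f) (Set.countable_range f)
  refine ⟨fun b => if hb : ∃ a, e a = b then f hb.choose else w b, ?_, ?_⟩
  · intro b b' heq
    dsimp only at heq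
    by_cases hb : ∃ a, e a = b <;> by_cases hb' : ∃ a, e a = b'
    · rw [dif_pos hb, dif_pos hb'] at heq
      have := hf heq
      rw [← hb.choose_spec, ← hb'.choose_spec, this]
    · rw [dif_pos hb, dif_neg hb'] at heq
      exact absurd (⟨hb.choose, heq⟩ : w b' ∈ Set.range f) (hw b')
    · rw [dif_neg hb, dif_pos hb'] at heq
      exact absurd (⟨hb'.choose, heq.symm⟩ : w b ∈ Set.range f) (hw b)
    · rw [dif_neg hb, dif_neg hb'] at heq
      exact hwinj heq
  · intro a
    have hb : ∃ a', e a' = e a := ⟨a, rfl⟩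
    show dite _ _ _ = _
    rw [dif_pos hb]
    exact congrArg f (e.injective hb.choose_spec)

end Helpers


section Step

/-- The key construction: any name over `ℂ_{ω₁}` is pattern-equivalent (on `ω`) to a
(transferred) name over `ℂ_B` for a suitable countable linear order `B` extending `A`. -/
theorem step_construction {A : Set ℚ} (f : A → (Cardinal.aleph 1).out)
    (hf : Function.Injective f)
    (σb : PName (CohenCond (Cardinal.aleph 1).out)) :
    ∃ (B : Set ℚ) (e : A ↪o B) (g : B → (Cardinal.aleph 1).out)
      (hg : Function.Injective g) (τ : PName (CohenCond B)),
      (∀ a, g (e a) = f a) ∧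
      (∀ z (p q : CohenCond B), p ≤ q → q ∈ τ z → p ∈ τ z) ∧
      (∀ z, z ∈ ZFSet.omega → ∀ Q, Pat (σb z) Q ↔ Pat (τ z) (restC g hg Q)) := by
  classical
  have hbig : Cardinal.aleph0 < Cardinal.mk (Cardinal.aleph 1).out := by
    rw [Cardinal.mk_out]
    exact Cardinal.aleph0_lt_aleph_one
  -- a coding of the index set by reals, for ccc
  have hcont : Cardinal.mk (Cardinal.aleph 1).out ≤ Cardinal.mk (ℕ → Bool) := by
    rw [Cardinal.mk_out]
    have h1 : Cardinal.mk (ℕ → Bool) = Cardinal.continuum := by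
      rw [← Cardinal.power_def, Cardinal.mk_bool, Cardinal.mk_nat]
      rfl
    rw [h1]
    exact Cardinal.aleph_one_le_continuum
  obtain ⟨jemb⟩ := (Cardinal.le_def _ _).mp hcont
  -- countable pattern bases for the values of the name
  have hbasis : ∀ z : ZFSet, ∃ X : Set (CohenCond (Cardinal.aleph 1).out),
      X.Countable ∧ ∀ Q, (Pat (σb z) Q ↔ Pat (DSet X) Q) :=
    fun z => exists_countable_pat_basis jemb jemb.injective (σb z)
  choose Xz hXc hXpat using hbasis
  -- the countable support
  set S₀ : Set (Cardinal.aleph 1).out := Set.range f ∪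
    ⋃ (n : ℕ), ⋃ x ∈ Xz (ZFSet.mk (PSet.ofNat n)), (suppC x : Set (Cardinal.aleph 1).out)
    with hS₀def
  have hS₀c : S₀.Countable := by
    apply Set.Countable.union (Set.countable_range f)
    apply Set.countable_iUnion
    intro n
    exact Set.Countable.biUnion (hXc _) fun x _ => (suppC x).countable_toSet
  -- squish ℚ into the rational interval (0,1)
  haveI : (Set.Ioo (0:ℚ) 1).OrdConnected := Set.ordConnected_Ioo
  haveI : Nontrivial ↥(Set.Ioo (0:ℚ) 1) := by
    refine ⟨⟨⟨1/3, by norm_num⟩, ⟨1/2, by norm_num⟩, ?_⟩⟩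
    intro hcon
    rw [Subtype.ext_iff] at hcon
    norm_num at hcon
  obtain ⟨h⟩ := Order.embedding_from_countable_to_dense (α := ℚ) (β := ↥(Set.Ioo (0:ℚ) 1))
  set Bimg : Set ℚ := (fun q : ℚ => ((h q : ↥(Set.Ioo (0:ℚ) 1)) : ℚ)) '' A with hBimg
  set Bext : Set ℚ := Set.Ioo 2 3 with hBext
  set B : Set ℚ := Bimg ∪ Bext with hBdef
  -- the order embedding of A into B
  have hemono : StrictMono (fun a : A =>
      (⟨((h a.1 : ↥(Set.Ioo (0:ℚ) 1)) : ℚ), Or.inl ⟨a.1, a.2, rfl⟩⟩ : B)) := by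
    intro a a' hlt
    have : (a : ℚ) < (a' : ℚ) := hlt
    exact Subtype.mk_lt_mk.mpr (Subtype.coe_lt_coe.mpr (h.strictMono this))
  set e : A ↪o B := OrderEmbedding.ofStrictMono _ hemono with hedef
  have hecoe : ∀ a : A, ((e a : ℚ)) = ((h a.1 : ↥(Set.Ioo (0:ℚ) 1)) : ℚ) := fun a => rfl
  -- auxiliary injections
  obtain ⟨w, hwinj, hw⟩ := inj_avoid hbig ℕ S₀ hS₀c
  set C : Set (Cardinal.aleph 1).out := (S₀ \ Set.range f) ∪ Set.range w with hCdef
  have hCcount : C.Countable := (hS₀c.mono Set.diff_subset).union (Set.countable_range w)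
  have hCinf : C.Infinite :=
    Set.Infinite.mono Set.subset_union_right (Set.infinite_range_of_injective hwinj)
  have hCf : ∀ y ∈ C, y ∉ Set.range f := by
    rintro y (hy | hy)
    · exact hy.2
    · intro hyf
      obtain ⟨n, rfl⟩ := hy
      exact hw n (Set.mem_union_left _ hyf)
  haveI : Countable ↥C := hCcount.to_subtype
  haveI : Infinite ↥C := hCinf.to_subtype
  haveI : Infinite ↥Bext := Set.Ioo.infinite (by norm_num : (2:ℚ) < 3)
  haveI : Countable ↥Bext := (Set.to_countable Bext).to_subtype
  obtain ⟨u0⟩ := nonempty_equiv_of_ctbl_inf ↥Bext ↥C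
  -- the membership lemma for the else-branch
  have hmemBext : ∀ b : B, (¬∃ a : A, ((h a.1 : ↥(Set.Ioo (0:ℚ) 1)) : ℚ) = b.1) →
      b.1 ∈ Bext := by
    intro b hb
    rcases b.2 with hbi | hbe
    · obtain ⟨q, hq, heq⟩ := hbi
      exact absurd ⟨⟨q, hq⟩, heq⟩ hb
    · exact hbe
  -- the extension g of f to B
  set g : B → (Cardinal.aleph 1).out := fun b =>
    if hb : ∃ a : A, ((h a.1 : ↥(Set.Ioo (0:ℚ) 1)) : ℚ) = b.1 then f hb.choose
    else (u0 ⟨b.1, hmemBext b hb⟩ : ↥C).1 with hgdef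
  have hinj2 : Function.Injective (fun a : A => ((h a.1 : ↥(Set.Ioo (0:ℚ) 1)) : ℚ)) := by
    intro a a' hh
    exact Subtype.ext (h.injective (Subtype.ext hh))
  have hgpos : ∀ (b : B) (hb : ∃ a : A, ((h a.1 : ↥(Set.Ioo (0:ℚ) 1)) : ℚ) = b.1),
      g b = f hb.choose := by
    intro b hb
    show dite _ _ _ = _
    rw [dif_pos hb]
  have hgneg : ∀ (b : B) (hb : ¬∃ a : A, ((h a.1 : ↥(Set.Ioo (0:ℚ) 1)) : ℚ) = b.1),
      g b = (u0 ⟨b.1, hmemBext b hb⟩ : ↥C).1 := by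
    intro b hb
    show dite _ _ _ = _
    rw [dif_neg hb]
  have hge : ∀ a : A, g (e a) = f a := by
    intro a
    have hb : ∃ a' : A, ((h a'.1 : ↥(Set.Ioo (0:ℚ) 1)) : ℚ) = (e a).1 := ⟨a, rfl⟩
    rw [hgpos (e a) hb]
    exact congrArg f (hinj2 hb.choose_spec)
  have hginj : Function.Injective g := by
    intro b b' heq
    by_cases hb : ∃ a : A, ((h a.1 : ↥(Set.Ioo (0:ℚ) 1)) : ℚ) = b.1 <;>
      by_cases hb' : ∃ a : A, ((h a.1 : ↥(Set.Ioo (0:ℚ) 1)) : ℚ) = b'.1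
    · rw [hgpos b hb, hgpos b' hb'] at heq
      have := hf heq
      apply Subtype.ext
      rw [← hb.choose_spec, ← hb'.choose_spec, this]
    · rw [hgpos b hb, hgneg b' hb'] at heq
      exact absurd ⟨hb.choose, heq⟩ (hCf _ (u0 ⟨b'.1, hmemBext b' hb'⟩).2)
    · rw [hgneg b hb, hgpos b' hb'] at heq
      exact absurd ⟨hb'.choose, heq.symm⟩ (hCf _ (u0 ⟨b.1, hmemBext b hb⟩).2)
    · rw [hgneg b hb, hgneg b' hb'] at heq
      have := u0.injective (Subtype.ext heq)
      rw [Subtype.ext_iff] at this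
      exact Subtype.ext this
  -- S₀ is contained in the range of g
  have hrange : S₀ ⊆ Set.range g := by
    intro y hy
    by_cases hyf : y ∈ Set.range f
    · obtain ⟨a, rfl⟩ := hyf
      exact ⟨e a, hge a⟩
    · have hyC : y ∈ C := Set.mem_union_left _ ⟨hy, hyf⟩
      set x : ↥Bext := u0.symm ⟨y, hyC⟩ with hxdef
      refine ⟨⟨x.1, Or.inr x.2⟩, ?_⟩
      have hb : ¬∃ a : A, ((h a.1 : ↥(Set.Ioo (0:ℚ) 1)) : ℚ) = (⟨x.1, Or.inr x.2⟩ : B).1 := by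
        rintro ⟨a, ha⟩
        have h1 : ((h a.1 : ↥(Set.Ioo (0:ℚ) 1)) : ℚ) < 1 := (h a.1).2.2
        have h2 : (2 : ℚ) < x.1 := x.2.1
        rw [ha] at h1
        norm_num at h1 h2
        linarith
      rw [hgneg _ hb]
      have : (⟨(⟨x.1, Or.inr x.2⟩ : B).1, hmemBext _ hb⟩ : ↥Bext) = x := Subtype.ext rfl
      rw [this, hxdef]
      simp
  -- the small name
  set τ : PName (CohenCond B) := fun z => DSet ((restC g hginj) '' (Xz z)) with hτdef
  refine ⟨B, e, g, hginj, τ, hge, ?_, ?_⟩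
  · intro z p q hpq hq
    exact dc_DSet hpq hq
  · intro z hz Q
    obtain ⟨n, rfl⟩ := mem_omega_enum hz
    have hsupp : ∀ x ∈ Xz (ZFSet.mk (PSet.ofNat n)), ∀ y ∈ suppC x, y ∈ Set.range g := by
      intro x hx y hy
      apply hrange
      apply Set.mem_union_right
      exact Set.mem_iUnion.mpr ⟨n, Set.mem_biUnion hx hy⟩
    have htEq : tSet g hginj ((restC g hginj) '' (Xz (ZFSet.mk (PSet.ofNat n)))) =
        DSet (Xz (ZFSet.mk (PSet.ofNat n))) := by
      ext Q'
      constructor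
      · rintro ⟨p, ⟨x, hx, rfl⟩, hsub⟩
        refine ⟨x, hx, ?_⟩
        rwa [mapC_restC (hsupp x hx)] at hsub
      · rintro ⟨x, hx, hQx⟩
        refine ⟨restC g hginj x, ⟨x, hx, rfl⟩, ?_⟩
        rw [mapC_restC (hsupp x hx)]
        exact hQx
    calc Pat (σb (ZFSet.mk (PSet.ofNat n))) Q
        ↔ Pat (DSet (Xz (ZFSet.mk (PSet.ofNat n)))) Q := hXpat _ Q
      _ ↔ Pat (tSet g hginj ((restC g hginj) '' (Xz (ZFSet.mk (PSet.ofNat n))))) Q := by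
          rw [htEq]
      _ ↔ Pat (DSet ((restC g hginj) '' (Xz (ZFSet.mk (PSet.ofNat n)))))
            (restC g hginj Q) := pat_tSet
      _ ↔ Pat (τ (ZFSet.mk (PSet.ofNat n))) (restC g hginj Q) := Iff.rfl

end Step


section MainGame

/-- Alternating second-order quantifier prefix driven by a list of flags. -/
def altF : List Bool → SOFormula → SOFormula
  | [], ψ => ψ
  | true :: bs, ψ => SOFormula.exSO (altF bs ψ)
  | false :: bs, ψ => SOFormula.allSO (altF bs ψ)

theorem altPrefix_eq_altF (ψ : SOFormula) :
    ∀ (n : ℕ) (b : Bool), altPrefix b n ψ = altF (altBools b n) ψ := by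
  intro n
  induction n with
  | zero => intro b; cases b <;> rfl
  | succ n ih =>
    intro b
    cases b
    · show SOFormula.allSO (altPrefix true n ψ) = altF (false :: altBools (!false) n) ψ
      rw [ih true]
      rfl
    · show SOFormula.exSO (altPrefix false n ψ) = altF (true :: altBools (!true) n) ψ
      rw [ih false]
      rfl

theorem transferName_DSet {A B : Set ℚ} (e : A ↪o B) (σ : PName (CohenCond A)) :
    transferName e (fun z => DSet (σ z)) = transferName e σ := by
  funext z
  refine (transferName_apply e (fun z => DSet (σ z)) z).trans (Eq.trans ?_ (transferName_apply e σ z).symm)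
  exact tSet_DSet

/-- At the head of a nonempty game, a name can be replaced by its downward closure. -/
theorem LOGame_head_DSet (ψ : SOFormula) (b : Bool) (bs : List Bool) (B : Set ℚ)
    (σ : PName (CohenCond B)) (W : ℕ → PName (CohenCond B)) :
    LOGame ψ (b :: bs) B (consF (fun z => DSet (σ z)) W) ↔
      LOGame ψ (b :: bs) B (consF σ W) := by
  have hvec : ∀ (B' : Set ℚ) (e' : B ↪o B'),
      (fun n => transferName e' ((consF (fun z => DSet (σ z)) W) n)) =
      (fun n => transferName e' ((consF σ W) n)) := by
    intro B' e'
    funext n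
    cases n with
    | zero => exact transferName_DSet e' σ
    | succ n => rfl
  cases b
  · show (∀ B' : Set ℚ, B'.Countable → ∀ (e' : B ↪o B') (σ2 : PName (CohenCond B')),
        LOGame ψ bs B' (consF σ2 _)) ↔ (∀ B' : Set ℚ, B'.Countable →
        ∀ (e' : B ↪o B') (σ2 : PName (CohenCond B')), LOGame ψ bs B' (consF σ2 _))
    constructor
    · intro hgame B' hB' e' σ2
      have := hgame B' hB' e' σ2
      exact cast (congrArg (fun W' => LOGame ψ bs B' (consF σ2 W')) (hvec B' e')) this
    · intro hgame B' hB' e' σ2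
      have := hgame B' hB' e' σ2
      rwa [← hvec B' e'] at this
  · show (∃ B' : Set ℚ, B'.Countable ∧ ∃ (e' : B ↪o B') (σ2 : PName (CohenCond B')),
        LOGame ψ bs B' (consF σ2 _)) ↔ (∃ B' : Set ℚ, B'.Countable ∧
        ∃ (e' : B ↪o B') (σ2 : PName (CohenCond B')), LOGame ψ bs B' (consF σ2 _))
    constructor
    · rintro ⟨B', hB', e', σ2, hgame⟩
      exact ⟨B', hB', e', σ2, cast (congrArg (fun W' => LOGame ψ bs B' (consF σ2 W')) (hvec B' e')) hgame⟩
    · rintro ⟨B', hB', e', σ2, hgame⟩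
      exact ⟨B', hB', e', σ2, by rwa [← hvec B' e'] at hgame⟩

/-- The main induction: the forcing of the alternating prefix over `ℂ_{ω₁}` is equivalent
to the linear-order name game, given matching name vectors. -/
theorem main_game (ψ : SOFormula) (hψ : NoSOQuant ψ) :
    ∀ (bs : List Bool) (A : Set ℚ) (V : ℕ → PName (CohenCond A))
      (f : A → (Cardinal.aleph 1).out) (hf : Function.Injective f)
      (U : ℕ → PName (CohenCond (Cardinal.aleph 1).out)),
      (∀ n z, z ∈ ZFSet.omega → ∀ Q, Pat (U n z) Q ↔ Pat (V n z) (restC f hf Q)) →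
      (bs ≠ [] → ∀ n z, z ∈ ZFSet.omega → ∀ p, Pat (V n z) p ↔ Pat (DSet (V n z)) p) →
      (Forces ZFSet.omega (CohenTop (Cardinal.aleph 1).out) (altF bs ψ) (fun _ => ∅) U ↔
        LOGame ψ bs A V) := by
  have hbig : Cardinal.aleph0 < Cardinal.mk (Cardinal.aleph 1).out := by
    rw [Cardinal.mk_out]
    exact Cardinal.aleph0_lt_aleph_one
  intro bs
  induction bs with
  | nil =>
    intro A V f hf U hm hd
    show _ ↔ Forces ZFSet.omega (CohenTop A) ψ (fun _ => ∅) V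
    have := Forces_transfer hf hψ (v := fun _ => ∅) hm (CohenTop (Cardinal.aleph 1).out)
    rwa [restC_top] at this
  | cons b bs ih =>
    intro A V f hf U hm hd
    have hd' := hd (by simp)
    -- matching of the transferred old names
    have hnewm : ∀ (B : Set ℚ) (e : A ↪o B) (g : B → (Cardinal.aleph 1).out)
        (hg : Function.Injective g), (∀ a, g (e a) = f a) →
        ∀ n z, z ∈ ZFSet.omega → ∀ Q,
          Pat (U n z) Q ↔ Pat (transferName e (V n) z) (restC g hg Q) := by
      intro B e g hg hge n z hz Q
      have hcomp : (g ∘ fun a : A => ((e a : B))) = f := funext fun a => hge a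
      have h1 : restC (fun a : A => ((e a : B))) (fun a a' h => e.injective h)
          (restC g hg Q) = restC f hf Q := by
        refine (restC_comp _).trans ?_
        exact restC_congr hcomp _
      calc Pat (U n z) Q ↔ Pat (V n z) (restC f hf Q) := hm n z hz Q
        _ ↔ Pat (DSet (V n z)) (restC f hf Q) := hd' n z hz _
        _ ↔ Pat (DSet (V n z)) (restC (fun a : A => ((e a : B)))
              (fun a a' h => e.injective h) (restC g hg Q)) := by rw [h1]
        _ ↔ Pat (transferName e (V n) z) (restC g hg Q) := by
              rw [transferName_apply]
              exact pat_tSet.symm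
    -- downward-closure stability of the new name vectors
    have hnewd : ∀ (B : Set ℚ) (e : A ↪o B) (σs : PName (CohenCond B)),
        (∀ z (p q : CohenCond B), p ≤ q → q ∈ σs z → p ∈ σs z) →
        ∀ n z, z ∈ ZFSet.omega → ∀ p,
          Pat ((consF σs fun k => transferName e (V k)) n z) p ↔
          Pat (DSet ((consF σs fun k => transferName e (V k)) n z)) p := by
      intro B e σs hσdc n z hz p
      cases n with
      | zero =>
        show Pat (σs z) p ↔ Pat (DSet (σs z)) p
        rw [DSet_of_dc fun p q hpq hq => hσdc z p q hpq hq]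
      | succ n =>
        show Pat (transferName e (V n) z) p ↔ Pat (DSet (transferName e (V n) z)) p
        rw [DSet_of_dc]
        intro p' q' hpq hq
        rw [transferName_apply] at hq ⊢
        exact dc_tSet hpq hq
    cases b
    · -- allSO case
      show Forces ZFSet.omega (CohenTop (Cardinal.aleph 1).out)
          (SOFormula.allSO (altF bs ψ)) (fun _ => ∅) U ↔ _
      constructor
      · intro hF B hBc e σ'
        obtain ⟨g, hg, hge⟩ := exists_ext_inj e hbig f hf
        by_cases hbs : bs = []
        · subst hbs
          have hm2 : ∀ n z, z ∈ ZFSet.omega → ∀ Q,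
              Pat ((consF (fun z => pbSet g hg (σ' z)) U) n z) Q ↔
              Pat ((consF σ' fun k => transferName e (V k)) n z) (restC g hg Q) := by
            intro n z hz Q
            cases n with
            | zero => exact pat_pbSet
            | succ n => exact hnewm B e g hg hge n z hz Q
          have := ih B (consF σ' fun k => transferName e (V k)) g hg
            (consF (fun z => pbSet g hg (σ' z)) U) hm2 (fun hne => absurd rfl hne)
          exact this.mp (hF fun z => pbSet g hg (σ' z))
        · set σs : PName (CohenCond B) := fun z => DSet (σ' z) with hσs
          have hm2 : ∀ n z, z ∈ ZFSet.omega → ∀ Q,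
              Pat ((consF (fun z => pbSet g hg (σs z)) U) n z) Q ↔
              Pat ((consF σs fun k => transferName e (V k)) n z) (restC g hg Q) := by
            intro n z hz Q
            cases n with
            | zero => exact pat_pbSet
            | succ n => exact hnewm B e g hg hge n z hz Q
          have hgame' := (ih B (consF σs fun k => transferName e (V k)) g hg
            (consF (fun z => pbSet g hg (σs z)) U) hm2
            (fun _ => hnewd B e σs fun z p q hpq hq => dc_DSet hpq hq)).mp
            (hF fun z => pbSet g hg (σs z))
          cases bs with
          | nil => exact absurd rfl hbs
          | cons b' bs' =>
            exact (LOGame_head_DSet ψ b' bs' B σ' (fun k => transferName e (V k))).mp hgame'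
      · intro hG σb
        obtain ⟨B, e, g, hg, τ, hge, hτdc, hτm⟩ := step_construction f hf σb
        have hm2 : ∀ n z, z ∈ ZFSet.omega → ∀ Q,
            Pat ((consF σb U) n z) Q ↔
            Pat ((consF τ fun k => transferName e (V k)) n z) (restC g hg Q) := by
          intro n z hz Q
          cases n with
          | zero => exact hτm z hz Q
          | succ n => exact hnewm B e g hg hge n z hz Q
        exact (ih B (consF τ fun k => transferName e (V k)) g hg (consF σb U) hm2
          (fun _ => hnewd B e τ hτdc)).mpr (hG B (Set.to_countable B) e τ)
    · -- exSO case
      show Forces ZFSet.omega (CohenTop (Cardinal.aleph 1).out)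
          (SOFormula.exSO (altF bs ψ)) (fun _ => ∅) U ↔ _
      constructor
      · intro hF
        obtain ⟨σb, hσb⟩ := exists_mix fun q hq => hF q hq
        obtain ⟨B, e, g, hg, τ, hge, hτdc, hτm⟩ := step_construction f hf σb
        have hm2 : ∀ n z, z ∈ ZFSet.omega → ∀ Q,
            Pat ((consF σb U) n z) Q ↔
            Pat ((consF τ fun k => transferName e (V k)) n z) (restC g hg Q) := by
          intro n z hz Q
          cases n with
          | zero => exact hτm z hz Q
          | succ n => exact hnewm B e g hg hge n z hz Q
        have hgame := (ih B (consF τ fun k => transferName e (V k)) g hg (consF σb U) hm2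
          (fun _ => hnewd B e τ hτdc)).mp hσb
        exact ⟨B, Set.to_countable B, e, τ, hgame⟩
      · rintro ⟨B, hBc, e, σ', hgame⟩
        obtain ⟨g, hg, hge⟩ := exists_ext_inj e hbig f hf
        by_cases hbs : bs = []
        · subst hbs
          have hm2 : ∀ n z, z ∈ ZFSet.omega → ∀ Q,
              Pat ((consF (fun z => pbSet g hg (σ' z)) U) n z) Q ↔
              Pat ((consF σ' fun k => transferName e (V k)) n z) (restC g hg Q) := by
            intro n z hz Q
            cases n with
            | zero => exact pat_pbSet
            | succ n => exact hnewm B e g hg hge n z hz Q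
          have hFσ := (ih B (consF σ' fun k => transferName e (V k)) g hg
            (consF (fun z => pbSet g hg (σ' z)) U) hm2 (fun hne => absurd rfl hne)).mpr hgame
          intro q hq
          exact ⟨q, le_rfl, fun z => pbSet g hg (σ' z), Forces_mono hq hFσ⟩
        · set σs : PName (CohenCond B) := fun z => DSet (σ' z) with hσs
          have hgame' : LOGame ψ bs B (consF σs fun k => transferName e (V k)) := by
            cases bs with
            | nil => exact absurd rfl hbs
            | cons b' bs' =>
              exact (LOGame_head_DSet ψ b' bs' B σ' (fun k => transferName e (V k))).mpr hgame
          have hm2 : ∀ n z, z ∈ ZFSet.omega → ∀ Q,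
              Pat ((consF (fun z => pbSet g hg (σs z)) U) n z) Q ↔
              Pat ((consF σs fun k => transferName e (V k)) n z) (restC g hg Q) := by
            intro n z hz Q
            cases n with
            | zero => exact pat_pbSet
            | succ n => exact hnewm B e g hg hge n z hz Q
          have hFσ := (ih B (consF σs fun k => transferName e (V k)) g hg
            (consF (fun z => pbSet g hg (σs z)) U) hm2
            (fun _ => hnewd B e σs fun z p q hpq hq => dc_DSet hpq hq)).mpr hgame'
          intro q hq
          exact ⟨q, le_rfl, fun z => pbSet g hg (σs z), Forces_mono hq hFσ⟩

end MainGame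

/-- Let `r ∈ 2^ω` and `n < ω`. (1) If `φ` is a `Σ¹ₙ` formula
`∃y₀∀y₁⋯ψ(x, y₀, y₁, …)` with `ψ` arithmetic, then `ℂ_{ω₁}` forces `φ(ř)` iff there is a
countable linear order `A₀` and a `ℂ_{A₀}`-name `ẏ₀` such that for every countable linear
order `A₁ ≥ A₀` and every `ℂ_{A₁}`-name `ẏ₁` there is a countable linear order `A₂ ≥ A₁`
and a `ℂ_{A₂}`-name `ẏ₂` such that …, such that the maximal condition of `ℂ_{A_{n-1}}`
forces `ψ(ř, ẏ₀, ẏ₁, …)`. (2) Dually for `Π¹ₙ` formulas `∀y₀∃y₁⋯ψ`. -/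
theorem cohen_omega1_names_linear_orders (r : ZFSet.{0}) (hr : r ⊆ ZFSet.omega)
    (n : ℕ) (ψ : SOFormula) (hψ : NoSOQuant ψ) :
    (CohenForcesProjTop (Cardinal.aleph 1).out (altPrefix true n ψ) r ↔
      LOGame ψ (altBools true n) ∅ (consF (checkPName r) (fun _ => emptyPName))) ∧
    (CohenForcesProjTop (Cardinal.aleph 1).out (altPrefix false n ψ) r ↔
      LOGame ψ (altBools false n) ∅ (consF (checkPName r) (fun _ => emptyPName))) := by
  have hcheckPat : ∀ {P : Type} [inst : Preorder P] (z : ZFSet) (p : P),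
      Pat (checkPName r z) p ↔ z ∈ r := by
    intro P inst z p
    constructor
    · intro hP
      obtain ⟨r', _, hmem⟩ := hP p le_rfl
      exact hmem
    · intro hzr q hq
      exact ⟨q, le_rfl, hzr⟩
  have hemptyPat : ∀ {P : Type} [inst : Preorder P] (z : ZFSet) (p : P),
      ¬ Pat (emptyPName z) p := by
    intro P inst z p hP
    obtain ⟨r', _, hmem⟩ := hP p le_rfl
    exact hmem
  have hcheckD : ∀ (z : ZFSet) (p : CohenCond (∅ : Set ℚ)),
      Pat (DSet (checkPName r z)) p ↔ z ∈ r := by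
    intro z p
    constructor
    · intro hP
      obtain ⟨r', _, x, hx, _⟩ := hP p le_rfl
      exact hx
    · intro hzr q hq
      exact ⟨q, le_rfl, q, hzr, le_rfl⟩
  have hemptyD : ∀ (z : ZFSet) (p : CohenCond (∅ : Set ℚ)),
      ¬ Pat (DSet (emptyPName z)) p := by
    intro z p hP
    obtain ⟨r', _, x, hx, _⟩ := hP p le_rfl
    exact hx
  have hf : Function.Injective
      (fun a : (∅ : Set ℚ) => (absurd a.2 (Set.notMem_empty a.1) : (Cardinal.aleph 1).out)) :=
    fun a => absurd a.2 (Set.notMem_empty a.1)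
  have hm : ∀ (n : ℕ) z, z ∈ ZFSet.omega →
      ∀ Q : CohenCond (Cardinal.aleph 1).out,
      Pat ((consF (checkPName r) fun _ => emptyPName) n z) Q ↔
      Pat ((consF (checkPName r) fun _ => emptyPName) n z) (restC _ hf Q) := by
    intro n z hz Q
    cases n with
    | zero => exact (hcheckPat z Q).trans (hcheckPat z _).symm
    | succ n => exact iff_of_false (hemptyPat z Q) (hemptyPat z _)
  have hd : ∀ (n : ℕ) z, z ∈ ZFSet.omega → ∀ p : CohenCond (∅ : Set ℚ),
      Pat ((consF (checkPName r) fun _ => emptyPName) n z) p ↔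
      Pat (DSet ((consF (checkPName r) fun _ => emptyPName) n z)) p := by
    intro n z hz p
    cases n with
    | zero => exact (hcheckPat z p).trans (hcheckD z p).symm
    | succ n => exact iff_of_false (hemptyPat z p) (hemptyD z p)
  constructor
  · show Forces ZFSet.omega (CohenTop (Cardinal.aleph 1).out) (altPrefix true n ψ)
      (fun _ => ∅) (consF (checkPName r) (fun _ => emptyPName)) ↔ _
    rw [altPrefix_eq_altF ψ n true]
    exact main_game ψ hψ (altBools true n) ∅ (consF (checkPName r) fun _ => emptyPName)
      _ hf (consF (checkPName r) fun _ => emptyPName) hm (fun _ => hd)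
  · show Forces ZFSet.omega (CohenTop (Cardinal.aleph 1).out) (altPrefix false n ψ)
      (fun _ => ∅) (consF (checkPName r) (fun _ => emptyPName)) ↔ _
    rw [altPrefix_eq_altF ψ n false]
    exact main_game ψ hψ (altBools false n) ∅ (consF (checkPName r) fun _ => emptyPName)
      _ hf (consF (checkPName r) fun _ => emptyPName) hm (fun _ => hd)
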